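/- arXiv:1602.01341 — 4 statements merged into one kernel-verified Lean document; each statement's English description precedes it below -/
import Mathlib

section
/- Let n ≥ 1 be an integer, let a, b ≥ 0 and p, q > 0. Then for every u : ℤⁿ → ℂ with ‖u‖_{a+p+q} < ∞ and every v : ℤⁿ → ℂ with ‖v‖_{b+p+q} < ∞ one has ‖u‖_{a+p} · ‖v‖_{b+q} ≤ ‖u‖_{a+p+q} · ‖v‖_b + ‖u‖_a · ‖v‖_{b+p+q}. -/
open scoped ENNReal

/-- `|i| := max_k |i_k|` for a multi-index `i ∈ ℤⁿ`. -/
def absIdx {n : ℕ} (i : Fin n → ℤ) : ℕ :=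
  Finset.univ.sup fun k => (i k).natAbs

/-- `⟨i⟩ := max(1, |i|)`. -/
noncomputable def wt {n : ℕ} (i : Fin n → ℤ) : ℝ := max 1 (absIdx i : ℝ)

/-- Sobolev norm `‖u‖_s := (Σ_i ⟨i⟩^{2s} |u_i|²)^{1/2}` (valued in `ℝ≥0∞`). -/
noncomputable def sobNorm {n : ℕ} (u : (Fin n → ℤ) → ℂ) (s : ℝ) : ℝ≥0∞ :=
  (∑' i : Fin n → ℤ, ENNReal.ofReal (wt i ^ (2 * s)) * (‖u i‖₊ : ℝ≥0∞) ^ 2) ^ (1/2 : ℝ)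

lemma wt_pos {n : ℕ} (i : Fin n → ℤ) : 0 < wt i :=
  lt_of_lt_of_le one_pos (le_max_left _ _)

/-- Hölder for `tsum` in `ℝ≥0∞`. -/
lemma holder_tsum {ι : Type*} (f g : ι → ℝ≥0∞) {p q : ℝ} (hpq : p.HolderConjugate q) :
    ∑' i, f i * g i ≤ (∑' i, f i ^ p) ^ (1 / p) * (∑' i, g i ^ q) ^ (1 / q) := by
  rw [ENNReal.tsum_eq_iSup_sum]
  refine iSup_le fun s => (ENNReal.inner_le_Lp_mul_Lq s f g hpq).trans ?_
  exact mul_le_mul'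
    (ENNReal.rpow_le_rpow (ENNReal.sum_le_tsum s) (one_div_nonneg.mpr hpq.pos.le))
    (ENNReal.rpow_le_rpow (ENNReal.sum_le_tsum s) (one_div_nonneg.mpr hpq.symm.pos.le))

/-- Interpolation inequality for Sobolev norms. -/
lemma sob_interp {n : ℕ} (u : (Fin n → ℤ) → ℂ) (s₁ s₂ θ : ℝ) (hθ0 : 0 < θ) (hθ1 : θ < 1) :
    sobNorm u (θ * s₁ + (1 - θ) * s₂) ≤ sobNorm u s₁ ^ θ * sobNorm u s₂ ^ (1 - θ) := by
  have hθ1' : 0 < 1 - θ := by linarith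
  set F : (Fin n → ℤ) → ℝ≥0∞ :=
    fun i => ENNReal.ofReal (wt i ^ (2 * s₁)) * (‖u i‖₊ : ℝ≥0∞) ^ 2 with hF
  set G : (Fin n → ℤ) → ℝ≥0∞ :=
    fun i => ENNReal.ofReal (wt i ^ (2 * s₂)) * (‖u i‖₊ : ℝ≥0∞) ^ 2 with hG
  have key : ∀ i, ENNReal.ofReal (wt i ^ (2 * (θ * s₁ + (1 - θ) * s₂))) * (‖u i‖₊ : ℝ≥0∞) ^ 2
      = F i ^ θ * G i ^ (1 - θ) := by
    intro i
    have hw := wt_pos i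
    have hreal : wt i ^ (2 * (θ * s₁ + (1 - θ) * s₂))
        = (wt i ^ (2 * s₁)) ^ θ * (wt i ^ (2 * s₂)) ^ (1 - θ) := by
      rw [← Real.rpow_mul hw.le, ← Real.rpow_mul hw.le, ← Real.rpow_add hw]
      ring_nf
    rw [hreal, ENNReal.ofReal_mul (Real.rpow_nonneg (Real.rpow_nonneg hw.le _) _),
      ← ENNReal.ofReal_rpow_of_pos (Real.rpow_pos_of_pos hw _),
      ← ENNReal.ofReal_rpow_of_pos (Real.rpow_pos_of_pos hw _), hF, hG]
    simp only []
    rw [ENNReal.mul_rpow_of_nonneg _ _ hθ0.le, ENNReal.mul_rpow_of_nonneg _ _ hθ1'.le]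
    have hx : ((‖u i‖₊ : ℝ≥0∞) ^ 2) ^ θ * ((‖u i‖₊ : ℝ≥0∞) ^ 2) ^ (1 - θ)
        = (‖u i‖₊ : ℝ≥0∞) ^ 2 := by
      rw [← ENNReal.rpow_add_of_nonneg _ _ hθ0.le hθ1'.le]
      norm_num
    calc ENNReal.ofReal (wt i ^ (2 * s₁)) ^ θ * ENNReal.ofReal (wt i ^ (2 * s₂)) ^ (1 - θ)
          * (‖u i‖₊ : ℝ≥0∞) ^ 2
        = ENNReal.ofReal (wt i ^ (2 * s₁)) ^ θ * ENNReal.ofReal (wt i ^ (2 * s₂)) ^ (1 - θ)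
          * (((‖u i‖₊ : ℝ≥0∞) ^ 2) ^ θ * ((‖u i‖₊ : ℝ≥0∞) ^ 2) ^ (1 - θ)) := by rw [hx]
      _ = ENNReal.ofReal (wt i ^ (2 * s₁)) ^ θ * ((‖u i‖₊ : ℝ≥0∞) ^ 2) ^ θ
          * (ENNReal.ofReal (wt i ^ (2 * s₂)) ^ (1 - θ) * ((‖u i‖₊ : ℝ≥0∞) ^ 2) ^ (1 - θ)) := by
            ring
  have hpq : (1 / θ).HolderConjugate (1 / (1 - θ)) := by
    rw [Real.holderConjugate_iff]; constructor
    · rw [lt_div_iff₀ hθ0]; linarith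
    · rw [one_div, one_div, inv_inv, inv_inv]; ring
  have hθinv : θ * (1 / θ) = 1 := by field_simp
  have hθinv' : (1 - θ) * (1 / (1 - θ)) = 1 := by field_simp
  have hholder : (∑' i, ENNReal.ofReal (wt i ^ (2 * (θ * s₁ + (1 - θ) * s₂)))
      * (‖u i‖₊ : ℝ≥0∞) ^ 2) ≤ (∑' i, F i) ^ θ * (∑' i, G i) ^ (1 - θ) := by
    calc (∑' i, ENNReal.ofReal (wt i ^ (2 * (θ * s₁ + (1 - θ) * s₂))) * (‖u i‖₊ : ℝ≥0∞) ^ 2)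
        = ∑' i, (F i ^ θ) * (G i ^ (1 - θ)) := by exact tsum_congr key
      _ ≤ (∑' i, (F i ^ θ) ^ (1 / θ)) ^ (1 / (1 / θ))
          * (∑' i, (G i ^ (1 - θ)) ^ (1 / (1 - θ))) ^ (1 / (1 / (1 - θ))) :=
            holder_tsum _ _ hpq
      _ = (∑' i, F i) ^ θ * (∑' i, G i) ^ (1 - θ) := by
            simp only [← ENNReal.rpow_mul, hθinv, hθinv', ENNReal.rpow_one, one_div_one_div]
  calc sobNorm u (θ * s₁ + (1 - θ) * s₂)
      ≤ ((∑' i, F i) ^ θ * (∑' i, G i) ^ (1 - θ)) ^ (1/2 : ℝ) := by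
        unfold sobNorm; exact ENNReal.rpow_le_rpow hholder (by norm_num)
    _ = sobNorm u s₁ ^ θ * sobNorm u s₂ ^ (1 - θ) := by
        unfold sobNorm
        rw [ENNReal.mul_rpow_of_nonneg _ _ (by norm_num : (0:ℝ) ≤ 1/2),
          ← ENNReal.rpow_mul, ← ENNReal.rpow_mul, ← ENNReal.rpow_mul, ← ENNReal.rpow_mul,
          mul_comm θ (1/2 : ℝ), mul_comm (1 - θ) (1/2 : ℝ)]

theorem stmt2 (n : ℕ) (hn : 1 ≤ n) (a b p q : ℝ)
    (ha : 0 ≤ a) (hb : 0 ≤ b) (hp : 0 < p) (hq : 0 < q)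
    (u v : (Fin n → ℤ) → ℂ)
    (hu : sobNorm u (a + p + q) < ⊤) (hv : sobNorm v (b + p + q) < ⊤) :
    sobNorm u (a + p) * sobNorm v (b + q) ≤
      sobNorm u (a + p + q) * sobNorm v b + sobNorm u a * sobNorm v (b + p + q) := by
  have hpq : 0 < p + q := by linarith
  set θ : ℝ := q / (p + q) with hθ
  have hθ0 : 0 < θ := div_pos hq hpq
  have hθ1 : θ < 1 := by rw [hθ, div_lt_one hpq]; linarith
  have h1 : a + p = θ * a + (1 - θ) * (a + p + q) := by
    rw [hθ]; field_simp; ring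
  have h2 : b + q = (1 - θ) * b + (1 - (1 - θ)) * (b + p + q) := by
    rw [hθ]; field_simp; ring
  have hu' := sob_interp u a (a + p + q) θ hθ0 hθ1
  rw [← h1] at hu'
  have hv' := sob_interp v b (b + p + q) (1 - θ) (by linarith) (by linarith)
  rw [← h2, (by ring : 1 - (1 - θ) = θ)] at hv'
  set x := sobNorm u a
  set X := sobNorm u (a + p + q)
  set y := sobNorm v b
  set Y := sobNorm v (b + p + q)
  set m : ℝ≥0∞ := X * y + x * Y with hm
  calc sobNorm u (a + p) * sobNorm v (b + q)
      ≤ (x ^ θ * X ^ (1 - θ)) * (y ^ (1 - θ) * Y ^ θ) := mul_le_mul' hu' hv'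
    _ = (x * Y) ^ θ * (X * y) ^ (1 - θ) := by
        rw [ENNReal.mul_rpow_of_nonneg _ _ hθ0.le,
          ENNReal.mul_rpow_of_nonneg _ _ (by linarith : (0:ℝ) ≤ 1 - θ)]
        ring
    _ ≤ m ^ θ * m ^ (1 - θ) :=
        mul_le_mul' (ENNReal.rpow_le_rpow le_add_self hθ0.le)
          (ENNReal.rpow_le_rpow le_self_add (by linarith))
    _ = m := by
        rw [← ENNReal.rpow_add_of_nonneg _ _ hθ0.le (by linarith : (0:ℝ) ≤ 1 - θ)]
        norm_num
end

section
/- Let n ≥ 1 and let A, B be n × n Hermitian (self-adjoint) complex matrices, with eigenvalues λ₁,…,λ_n of A and β₁,…,β_n of B. Assume δ := min_{i,j=1,…,n} |λ_j − β_i| > 0. Then there exists a constant K > 0 depending only on n such that for every n × n complex matrix R, the Sylvester equation AC − CB = R has a unique solution C, and this solution satisfies ‖C‖_∞ ≤ K δ^{−1} ‖R‖_∞. -/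
open Matrix

lemma unitary_entry_le_one {n : ℕ} {W : Matrix (Fin n) (Fin n) ℂ}
    (hW : W * star W = 1) (i j : Fin n) : ‖W i j‖ ≤ 1 := by
  have h1 : (W * star W) i i = 1 := by rw [hW]; simp
  rw [Matrix.mul_apply] at h1
  simp only [Matrix.star_apply] at h1
  have h2 : ∑ k, Complex.normSq (W i k) = 1 := by
    have := congrArg Complex.re h1
    simpa [Complex.mul_conj] using this
  have h3 : Complex.normSq (W i j) ≤ 1 := by
    rw [← h2]
    exact Finset.single_le_sum (fun k _ => Complex.normSq_nonneg _) (Finset.mem_univ j)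
  have : ‖W i j‖ ^ 2 ≤ 1 := by rwa [Complex.normSq_eq_norm_sq] at h3
  nlinarith [norm_nonneg (W i j)]

lemma triple_entry_bound {n : ℕ} (P M Q : Matrix (Fin n) (Fin n) ℂ)
    (hP : ∀ i j, ‖P i j‖ ≤ 1) (hQ : ∀ i j, ‖Q i j‖ ≤ 1)
    (c : ℝ) (hM : ∀ i j, ‖M i j‖ ≤ c) (i j : Fin n) :
    ‖(P * M * Q) i j‖ ≤ (n : ℝ)^2 * c := by
  have hc : 0 ≤ c := (norm_nonneg _).trans (hM i j)
  have hPM : ∀ l, ‖(P * M) i l‖ ≤ (n : ℝ) * c := by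
    intro l
    rw [Matrix.mul_apply]
    calc ‖∑ k, P i k * M k l‖ ≤ ∑ k, ‖P i k * M k l‖ := norm_sum_le _ _
      _ ≤ ∑ _k : Fin n, c := by
          apply Finset.sum_le_sum
          intro k _
          rw [norm_mul]
          calc ‖P i k‖ * ‖M k l‖ ≤ 1 * c :=
                mul_le_mul (hP i k) (hM k l) (norm_nonneg _) zero_le_one
            _ = c := one_mul c
      _ = (n : ℝ) * c := by simp [Finset.sum_const, mul_comm]
  rw [Matrix.mul_apply]
  calc ‖∑ l, (P * M) i l * Q l j‖ ≤ ∑ l, ‖(P * M) i l * Q l j‖ := norm_sum_le _ _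
    _ ≤ ∑ _l : Fin n, (n : ℝ) * c := by
        apply Finset.sum_le_sum
        intro l _
        rw [norm_mul]
        calc ‖(P*M) i l‖ * ‖Q l j‖ ≤ ((n:ℝ)*c) * 1 :=
              mul_le_mul (hPM l) (hQ l j) (norm_nonneg _) (by positivity)
          _ = (n:ℝ)*c := mul_one _
    _ = (n : ℝ)^2 * c := by simp [Finset.sum_const]; ring

/-- `‖M‖_∞`: the maximum of the absolute values of the entries of a finite matrix. -/
noncomputable def entrywiseSup {n : ℕ} (M : Matrix (Fin n) (Fin n) ℂ) : ℝ :=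
  ⨆ i : Fin n, ⨆ j : Fin n, ‖M i j‖

theorem stmt12 (n : ℕ) (hn : 1 ≤ n) :
    ∃ K : ℝ, 0 < K ∧
      ∀ (A B : Matrix (Fin n) (Fin n) ℂ) (hA : A.IsHermitian) (hB : B.IsHermitian),
        0 < ⨅ p : Fin n × Fin n, |hA.eigenvalues p.2 - hB.eigenvalues p.1| →
        ∀ R : Matrix (Fin n) (Fin n) ℂ,
          (∃! C : Matrix (Fin n) (Fin n) ℂ, A * C - C * B = R) ∧
          ∀ C : Matrix (Fin n) (Fin n) ℂ, A * C - C * B = R →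
            entrywiseSup C ≤
              K * (⨅ p : Fin n × Fin n, |hA.eigenvalues p.2 - hB.eigenvalues p.1|)⁻¹ *
                entrywiseSup R := by
  have hne : Nonempty (Fin n) := ⟨⟨0, hn⟩⟩
  have hnpos : (0:ℝ) < n := by exact_mod_cast hn
  refine ⟨(n:ℝ)^4, by positivity, ?_⟩
  intro A B hA hB hδ R
  set δ := ⨅ p : Fin n × Fin n, |hA.eigenvalues p.2 - hB.eigenvalues p.1| with hδdef
  set U : Matrix (Fin n) (Fin n) ℂ := (hA.eigenvectorUnitary : Matrix (Fin n) (Fin n) ℂ) with hUdef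
  set V : Matrix (Fin n) (Fin n) ℂ := (hB.eigenvectorUnitary : Matrix (Fin n) (Fin n) ℂ) with hVdef
  have hU1 : U * star U = 1 := Matrix.mem_unitaryGroup_iff.mp hA.eigenvectorUnitary.2
  have hU2 : star U * U = 1 := Matrix.mem_unitaryGroup_iff'.mp hA.eigenvectorUnitary.2
  have hV1 : V * star V = 1 := Matrix.mem_unitaryGroup_iff.mp hB.eigenvectorUnitary.2
  have hV2 : star V * V = 1 := Matrix.mem_unitaryGroup_iff'.mp hB.eigenvectorUnitary.2
  set D : Matrix (Fin n) (Fin n) ℂ := Matrix.diagonal (RCLike.ofReal ∘ hA.eigenvalues) with hDdef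
  set E : Matrix (Fin n) (Fin n) ℂ := Matrix.diagonal (RCLike.ofReal ∘ hB.eigenvalues) with hEdef
  have hAeq : A = U * D * star U := hA.spectral_theorem
  have hBeq : B = V * E * star V := hB.spectral_theorem
  -- δ bounds
  have hδle : ∀ i j : Fin n, δ ≤ |hA.eigenvalues i - hB.eigenvalues j| := fun i j =>
    ciInf_le (Set.Finite.bddBelow (Set.finite_range _)) (j, i)
  set ent : Fin n → Fin n → ℂ :=
    fun i j => ((hA.eigenvalues i : ℂ) - (hB.eigenvalues j : ℂ)) with hentdef
  have hnorment : ∀ i j, ‖ent i j‖ = |hA.eigenvalues i - hB.eigenvalues j| := by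
    intro i j
    have h : ent i j = ((hA.eigenvalues i - hB.eigenvalues j : ℝ) : ℂ) := by
      simp [hentdef]
    rw [h, Complex.norm_real, Real.norm_eq_abs]
  have hentne : ∀ i j, ent i j ≠ 0 := by
    intro i j h
    have h2 := hδle i j
    rw [← hnorment i j, h, norm_zero] at h2
    linarith
  -- recovery identities
  have hrec : ∀ X : Matrix (Fin n) (Fin n) ℂ, U * (star U * X * V) * star V = X := by
    intro X
    simp only [← Matrix.mul_assoc]
    rw [hU1, Matrix.one_mul, Matrix.mul_assoc, hV1, Matrix.mul_one]
  have hrec2 : ∀ M : Matrix (Fin n) (Fin n) ℂ, star U * (U * M * star V) * V = M := by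
    intro M
    simp only [← Matrix.mul_assoc]
    rw [hU2, Matrix.one_mul, Matrix.mul_assoc, hV2, Matrix.mul_one]
  -- key conjugation identity
  have key : ∀ C : Matrix (Fin n) (Fin n) ℂ,
      star U * (A * C - C * B) * V
        = Matrix.of (fun i j => ent i j * (star U * C * V) i j) := by
    intro C
    have h1 : star U * (A * C) * V = D * (star U * C * V) := by
      rw [hAeq]
      simp only [← Matrix.mul_assoc]
      rw [hU2, Matrix.one_mul]
    have h2 : star U * (C * B) * V = (star U * C * V) * E := by
      rw [hBeq]
      simp only [← Matrix.mul_assoc]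
      rw [Matrix.mul_assoc _ (star V) V, hV2, Matrix.mul_one]
    rw [Matrix.mul_sub, Matrix.sub_mul, h1, h2]
    ext i j
    simp only [Matrix.sub_apply, Matrix.of_apply, hDdef, hEdef,
      Matrix.diagonal_mul, Matrix.mul_diagonal, hentdef, Function.comp_apply]
    rw [sub_mul]
    congr 1
    exact mul_comm _ _
  -- the explicit solution
  set M₀ : Matrix (Fin n) (Fin n) ℂ :=
    Matrix.of (fun i j => (star U * R * V) i j / ent i j) with hM₀def
  set C₀ : Matrix (Fin n) (Fin n) ℂ := U * M₀ * star V with hC₀def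
  have heq₀ : A * C₀ - C₀ * B = R := by
    have h : star U * (A * C₀ - C₀ * B) * V = star U * R * V := by
      rw [key C₀]
      ext i j
      simp only [Matrix.of_apply, hC₀def, hrec2, hM₀def]
      rw [mul_comm, div_mul_cancel₀ _ (hentne i j)]
    have := congrArg (fun X => U * X * star V) h
    simpa only [hrec] using this
  have main : ∀ C : Matrix (Fin n) (Fin n) ℂ, A * C - C * B = R → C = C₀ := by
    intro C hC
    have h1 : Matrix.of (fun i j => ent i j * (star U * C * V) i j) = star U * R * V := by
      rw [← key C, hC]
    have hM : star U * C * V = M₀ := by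
      ext i j
      have h2 := congrFun (congrFun h1 i) j
      simp only [Matrix.of_apply] at h2
      rw [hM₀def]
      simp only [Matrix.of_apply, ← h2]
      rw [mul_div_cancel_left₀ _ (hentne i j)]
    calc C = U * (star U * C * V) * star V := (hrec C).symm
      _ = C₀ := by rw [hM, hC₀def]
  refine ⟨⟨C₀, heq₀, fun C hC => main C hC⟩, ?_⟩
  -- the bound
  intro C hC
  rw [main C hC]
  have hsupR : ∀ i j, ‖R i j‖ ≤ entrywiseSup R := by
    intro i j
    have h1 : ‖R i j‖ ≤ ⨆ k, ‖R i k‖ :=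
      le_ciSup (f := fun k => ‖R i k‖) (Set.Finite.bddAbove (Set.finite_range _)) j
    have h2 : (⨆ k, ‖R i k‖) ≤ ⨆ l, ⨆ k, ‖R l k‖ :=
      le_ciSup (f := fun l => ⨆ k, ‖R l k‖) (Set.Finite.bddAbove (Set.finite_range _)) i
    exact le_trans h1 (le_trans h2 (le_of_eq rfl))
  have hsupR0 : 0 ≤ entrywiseSup R :=
    le_trans (norm_nonneg _) (hsupR ⟨0, hn⟩ ⟨0, hn⟩)
  have hUent : ∀ i j, ‖U i j‖ ≤ 1 := unitary_entry_le_one hU1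
  have hsUent : ∀ i j, ‖(star U) i j‖ ≤ 1 :=
    unitary_entry_le_one (by rw [star_star]; exact hU2)
  have hVent : ∀ i j, ‖V i j‖ ≤ 1 := unitary_entry_le_one hV1
  have hsVent : ∀ i j, ‖(star V) i j‖ ≤ 1 :=
    unitary_entry_le_one (by rw [star_star]; exact hV2)
  have hR' : ∀ i j, ‖(star U * R * V) i j‖ ≤ (n:ℝ)^2 * entrywiseSup R :=
    triple_entry_bound _ _ _ hsUent hVent _ hsupR
  have hM₀b : ∀ i j, ‖M₀ i j‖ ≤ ((n:ℝ)^2 * entrywiseSup R) / δ := by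
    intro i j
    rw [hM₀def]
    simp only [Matrix.of_apply]
    rw [norm_div]
    apply div_le_div₀ (by positivity) (hR' i j) hδ
    rw [hnorment]
    exact hδle i j
  have hC₀b : ∀ i j, ‖C₀ i j‖ ≤ (n:ℝ)^2 * (((n:ℝ)^2 * entrywiseSup R) / δ) := by
    intro i j
    rw [hC₀def]
    exact triple_entry_bound _ _ _ hUent hsVent _ hM₀b i j
  have hfinal : (n:ℝ)^2 * (((n:ℝ)^2 * entrywiseSup R) / δ)
      = (n:ℝ)^4 * δ⁻¹ * entrywiseSup R := by
    rw [div_eq_mul_inv]; ring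
  rw [show entrywiseSup C₀ = ⨆ i, ⨆ j, ‖C₀ i j‖ from rfl]
  apply ciSup_le
  intro i
  apply ciSup_le
  intro j
  rw [← hfinal]
  exact hC₀b i j
end

section
/- Let a : ℝ → ℝ be a continuous 2π-periodic function with 1 + a(x) > 0 for all x. Define m := ((1/(2π)) ∫₀^{2π} (1 + a(x))^{−1/2} dx)^{−2} − 1 and ρ(x) := (1 + m)^{1/2} (1 + a(x))^{−1/2} − 1. Then: (i) ∫₀^{2π} ρ(x) dx = 0, so that ρ admits a 2π-periodic primitive ξ; and (ii) (1 + a(x))(1 + ρ(x))² = 1 + m for all x ∈ ℝ, i.e. any ξ with ξ' = ρ satisfies (1 + a)(1 + ξ')² = 1 + m identically, with m independent of x. -/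
open intervalIntegral in
theorem stmt16 (a : ℝ → ℝ) (ha : Continuous a)
    (haper : ∀ x, a (x + 2 * Real.pi) = a x) (hpos : ∀ x, 0 < 1 + a x) :
    let m : ℝ :=
      (((1 / (2 * Real.pi)) *
          ∫ x in (0 : ℝ)..(2 * Real.pi), (Real.sqrt (1 + a x))⁻¹) ^ 2)⁻¹ - 1
    let ρ : ℝ → ℝ := fun x => Real.sqrt (1 + m) * (Real.sqrt (1 + a x))⁻¹ - 1
    (∫ x in (0 : ℝ)..(2 * Real.pi), ρ x) = 0 ∧
    (∃ ξ : ℝ → ℝ, (∀ x, HasDerivAt ξ (ρ x) x) ∧ ∀ x, ξ (x + 2 * Real.pi) = ξ x) ∧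
    ∀ x, (1 + a x) * (1 + ρ x) ^ 2 = 1 + m := by
  intro m ρ
  have hpi : (0:ℝ) < 2 * Real.pi := by positivity
  have hsqrt_pos : ∀ x, 0 < Real.sqrt (1 + a x) := fun x => Real.sqrt_pos.2 (hpos x)
  have hcont : Continuous fun x => (Real.sqrt (1 + a x))⁻¹ := by
    apply Continuous.inv₀
    · exact ((continuous_const.add ha)).sqrt
    · exact fun x => (hsqrt_pos x).ne'
  set c : ℝ := ∫ x in (0:ℝ)..(2 * Real.pi), (Real.sqrt (1 + a x))⁻¹ with hc
  have hcpos : 0 < c := by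
    apply intervalIntegral.intervalIntegral_pos_of_pos (f := fun x => (Real.sqrt (1 + a x))⁻¹)
    · exact hcont.intervalIntegrable _ _
    · exact fun x => inv_pos.2 (hsqrt_pos x)
    · exact hpi
  have h1m : 1 + m = ((2 * Real.pi) / c) ^ 2 := by
    have : m = (((1 / (2 * Real.pi)) * c) ^ 2)⁻¹ - 1 := rfl
    rw [this]
    field_simp
    ring
  have hsq : Real.sqrt (1 + m) = (2 * Real.pi) / c := by
    rw [h1m, Real.sqrt_sq (by positivity)]
  have h1mpos : 0 < 1 + m := by rw [h1m]; positivity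
  have hρ : ∀ x, ρ x = (2 * Real.pi) / c * (Real.sqrt (1 + a x))⁻¹ - 1 := by
    intro x; simp only [ρ, hsq]
  have hρcont : Continuous ρ := by
    simp only [ρ]; exact (continuous_const.mul hcont).sub continuous_const
  have hρint : (∫ x in (0:ℝ)..(2 * Real.pi), ρ x) = 0 := by
    have h1 : (∫ x in (0:ℝ)..(2 * Real.pi), ρ x)
        = (2 * Real.pi) / c * c - (2 * Real.pi - 0) * 1 := by
      simp only [ρ, hsq]
      rw [intervalIntegral.integral_sub (f := fun x => 2 * Real.pi / c * (Real.sqrt (1 + a x))⁻¹) (g := fun _ => (1:ℝ)) ((continuous_const.mul hcont).intervalIntegrable _ _)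
        (intervalIntegrable_const), intervalIntegral.integral_const_mul,
        intervalIntegral.integral_const, ← hc]
      simp [smul_eq_mul]
    rw [h1]
    field_simp
    ring
  have hρper : ∀ x, ρ (x + 2 * Real.pi) = ρ x := by
    intro x; simp only [ρ, haper x]
  refine ⟨hρint, ⟨fun x => ∫ t in (0:ℝ)..x, ρ t, ?_, ?_⟩, ?_⟩
  · intro x
    exact intervalIntegral.integral_hasDerivAt_right (hρcont.intervalIntegrable _ _)
      (hρcont.stronglyMeasurableAtFilter _ _) hρcont.continuousAt
  · intro x
    have hsplit : (∫ t in (0:ℝ)..(x + 2 * Real.pi), ρ t)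
        = (∫ t in (0:ℝ)..x, ρ t) + ∫ t in x..(x + 2 * Real.pi), ρ t := by
      rw [intervalIntegral.integral_add_adjacent_intervals
        (hρcont.intervalIntegrable _ _) (hρcont.intervalIntegrable _ _)]
    have hper : Function.Periodic ρ (2 * Real.pi) := hρper
    simp only []
    rw [hsplit, hper.intervalIntegral_add_eq x 0, zero_add, hρint, add_zero]
  · intro x
    have h1 : 1 + ρ x = Real.sqrt (1 + m) * (Real.sqrt (1 + a x))⁻¹ := by
      simp only [ρ]; ring
    rw [h1, mul_pow, ← Real.sqrt_inv, Real.sq_sqrt h1mpos.le,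
      Real.sq_sqrt (inv_nonneg.2 (hpos x).le)]
    rw [mul_comm, mul_assoc, inv_mul_cancel₀ (hpos x).ne', mul_one]
end

section
/- Let n ≥ 1, s₀ ≥ 0, and τ₁, τ₂, μ₁, μ₂ ≥ 0, and set τ := max(τ₁, τ₂), μ := max(μ₁, μ₂). Let 𝒮 be the space of sequences h : ℤⁿ → ℂ with ‖h‖_s < ∞ for every s ≥ 0, let u ∈ 𝒮, and let Q₁, Q₂ : 𝒮 → 𝒮 be linear maps such that for i = 1, 2 and every s ≥ s₀ there is a constant C_i(s) > 0 with ‖Q_i h‖_s ≤ C_i(s)(‖h‖_{s+τ_i} + ‖u‖_{s+μ_i} ‖h‖_{s₀+τ_i}) for all h ∈ 𝒮. If ‖u‖_{s₀+τ+μ} ≤ 1, then for every s ≥ s₀ there is a constant C(s) > 0 (depending only on C₁ and C₂ evaluated at finitely many indices) such that the composition Q := Q₁ ∘ Q₂ satisfies ‖Q h‖_s ≤ C(s)(‖h‖_{s+τ₁+τ₂} + ‖u‖_{s+τ+μ} ‖h‖_{s₀+τ₁+τ₂}) for all h ∈ 𝒮. -/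
open scoped ENNReal

lemma sobNorm_mono {n : ℕ} (u : (Fin n → ℤ) → ℂ) {t t' : ℝ} (h : t ≤ t') :
    sobNorm u t ≤ sobNorm u t' := by
  unfold sobNorm
  refine ENNReal.rpow_le_rpow ?_ (by norm_num)
  refine ENNReal.tsum_le_tsum fun i => ?_
  refine mul_le_mul_left (ENNReal.ofReal_le_ofReal ?_) _
  exact Real.rpow_le_rpow_of_exponent_le (le_max_left 1 _) (by linarith)

theorem stmt18 (n : ℕ) (hn : 1 ≤ n) (s₀ τ₁ τ₂ μ₁ μ₂ : ℝ)
    (hs₀ : 0 ≤ s₀) (hτ₁ : 0 ≤ τ₁) (hτ₂ : 0 ≤ τ₂) (hμ₁ : 0 ≤ μ₁) (hμ₂ : 0 ≤ μ₂)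
    (u : (Fin n → ℤ) → ℂ) (hu : ∀ t : ℝ, 0 ≤ t → sobNorm u t < ⊤)
    (Q₁ Q₂ : ((Fin n → ℤ) → ℂ) →ₗ[ℂ] ((Fin n → ℤ) → ℂ))
    (hQmem₁ : ∀ h : (Fin n → ℤ) → ℂ, (∀ t : ℝ, 0 ≤ t → sobNorm h t < ⊤) →
      ∀ t : ℝ, 0 ≤ t → sobNorm (Q₁ h) t < ⊤)
    (hQmem₂ : ∀ h : (Fin n → ℤ) → ℂ, (∀ t : ℝ, 0 ≤ t → sobNorm h t < ⊤) →
      ∀ t : ℝ, 0 ≤ t → sobNorm (Q₂ h) t < ⊤)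
    (C₁ C₂ : ℝ → ℝ)
    (hC₁ : ∀ s, s₀ ≤ s → 0 < C₁ s) (hC₂ : ∀ s, s₀ ≤ s → 0 < C₂ s)
    (hQ₁ : ∀ s, s₀ ≤ s → ∀ h : (Fin n → ℤ) → ℂ, (∀ t : ℝ, 0 ≤ t → sobNorm h t < ⊤) →
      sobNorm (Q₁ h) s ≤ ENNReal.ofReal (C₁ s) *
        (sobNorm h (s + τ₁) + sobNorm u (s + μ₁) * sobNorm h (s₀ + τ₁)))
    (hQ₂ : ∀ s, s₀ ≤ s → ∀ h : (Fin n → ℤ) → ℂ, (∀ t : ℝ, 0 ≤ t → sobNorm h t < ⊤) →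
      sobNorm (Q₂ h) s ≤ ENNReal.ofReal (C₂ s) *
        (sobNorm h (s + τ₂) + sobNorm u (s + μ₂) * sobNorm h (s₀ + τ₂)))
    (husmall : sobNorm u (s₀ + max τ₁ τ₂ + max μ₁ μ₂) ≤ 1) :
    ∀ s, s₀ ≤ s → ∃ C : ℝ, 0 < C ∧
      ∀ h : (Fin n → ℤ) → ℂ, (∀ t : ℝ, 0 ≤ t → sobNorm h t < ⊤) →
        sobNorm (Q₁ (Q₂ h)) s ≤ ENNReal.ofReal C *
          (sobNorm h (s + τ₁ + τ₂) +
            sobNorm u (s + max τ₁ τ₂ + max μ₁ μ₂) * sobNorm h (s₀ + τ₁ + τ₂)) := by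
  intro s hs
  have h1 := hC₁ s hs
  have h2 := hC₂ (s + τ₁) (by linarith)
  have h3 := hC₂ (s₀ + τ₁) (by linarith)
  refine ⟨C₁ s * (C₂ (s + τ₁) + 2 * C₂ (s₀ + τ₁)), by positivity, ?_⟩
  intro h hh
  set τ := max τ₁ τ₂ with hτ
  set μ := max μ₁ μ₂ with hμ
  set A := sobNorm h (s + τ₁ + τ₂) with hA
  set B := sobNorm u (s + τ + μ) with hB
  set D := sobNorm h (s₀ + τ₁ + τ₂) with hD
  have hQ2mem := hQmem₂ h hh
  have e1 := hQ₁ s hs (Q₂ h) hQ2mem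
  have e2 := hQ₂ (s + τ₁) (by linarith) h hh
  have e3 := hQ₂ (s₀ + τ₁) (by linarith) h hh
  have hτ1 : τ₁ ≤ τ := le_max_left _ _
  have hτ2 : τ₂ ≤ τ := le_max_right _ _
  have hμ1 : μ₁ ≤ μ := le_max_left _ _
  have hμ2 : μ₂ ≤ μ := le_max_right _ _
  have hμ0 : 0 ≤ μ := le_trans hμ₁ hμ1
  have m1 : sobNorm (Q₂ h) (s + τ₁) ≤ ENNReal.ofReal (C₂ (s + τ₁)) * (A + B * D) := by
    refine e2.trans ?_
    gcongr
    · exact sobNorm_mono u (by linarith)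
    · exact sobNorm_mono h (by linarith)
  have m3 : sobNorm (Q₂ h) (s₀ + τ₁) ≤ ENNReal.ofReal (2 * C₂ (s₀ + τ₁)) * D := by
    refine e3.trans ?_
    have hu1 : sobNorm u (s₀ + τ₁ + μ₂) ≤ 1 :=
      (sobNorm_mono u (by rw [hτ, hμ] at *; linarith)).trans husmall
    calc ENNReal.ofReal (C₂ (s₀ + τ₁)) *
          (sobNorm h (s₀ + τ₁ + τ₂) + sobNorm u (s₀ + τ₁ + μ₂) * sobNorm h (s₀ + τ₂))
        ≤ ENNReal.ofReal (C₂ (s₀ + τ₁)) * (D + 1 * D) := by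
          gcongr
          exact sobNorm_mono h (by linarith)
      _ = ENNReal.ofReal (2 * C₂ (s₀ + τ₁)) * D := by
          rw [ENNReal.ofReal_mul (by norm_num), ENNReal.ofReal_ofNat]
          ring
  have mu1 : sobNorm u (s + μ₁) ≤ B := sobNorm_mono u (by linarith)
  calc sobNorm (Q₁ (Q₂ h)) s
      ≤ ENNReal.ofReal (C₁ s) *
        (sobNorm (Q₂ h) (s + τ₁) + sobNorm u (s + μ₁) * sobNorm (Q₂ h) (s₀ + τ₁)) := e1
    _ ≤ ENNReal.ofReal (C₁ s) *
        (ENNReal.ofReal (C₂ (s + τ₁)) * (A + B * D) +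
          B * (ENNReal.ofReal (2 * C₂ (s₀ + τ₁)) * D)) := by gcongr
    _ ≤ ENNReal.ofReal (C₁ s) *
        ((ENNReal.ofReal (C₂ (s + τ₁)) + ENNReal.ofReal (2 * C₂ (s₀ + τ₁))) * (A + B * D)) := by
        gcongr
        rw [add_mul]
        refine add_le_add_right ?_ _
        calc B * (ENNReal.ofReal (2 * C₂ (s₀ + τ₁)) * D)
            = ENNReal.ofReal (2 * C₂ (s₀ + τ₁)) * (B * D) := by ring
          _ ≤ ENNReal.ofReal (2 * C₂ (s₀ + τ₁)) * (A + B * D) := by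
              gcongr; exact le_add_self
    _ = ENNReal.ofReal (C₁ s * (C₂ (s + τ₁) + 2 * C₂ (s₀ + τ₁))) * (A + B * D) := by
        rw [ENNReal.ofReal_mul (le_of_lt h1), ENNReal.ofReal_add (le_of_lt h2) (by positivity),
          mul_assoc]
end
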